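/- Let m ≥ 6 be even and let k_2,…,k_m be positive natural numbers. Then 𝔉c([2, k_2, …, k_m]) = 𝔉([k_2 − 1, k_3, …, k_{m−1}, k_m − 1]) + 𝔉([k_3 − 1, k_4, …, k_{m−2}, k_{m−1} − 1]), where the right-hand sides are open-chain run-length fixed-point counts (a first or last run of length 0 corresponds to an empty block in the run-length encoding). -/

import Mathlib

/-- The open-chain AND-OR network map determined by an operator list `ops`
(`true` = AND, `false` = OR), on `ops.length + 2` nodes. -/
def chainMap (ops : List Bool) (x : Fin (ops.length + 2) → Bool) :
    Fin (ops.length + 2) → Bool := fun i =>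
  if h0 : (i : ℕ) = 0 then x ⟨1, by omega⟩
  else if hn : (i : ℕ) = ops.length + 1 then x ⟨ops.length, by omega⟩
  else
    have hi : 1 ≤ (i : ℕ) ∧ (i : ℕ) ≤ ops.length := by
      have := i.isLt; omega
    if ops.get ⟨(i : ℕ) - 1, by omega⟩
    then x ⟨(i : ℕ) - 1, by omega⟩ && x ⟨(i : ℕ) + 1, by omega⟩
    else x ⟨(i : ℕ) - 1, by omega⟩ || x ⟨(i : ℕ) + 1, by omega⟩

/-- `F ops` is the number of fixed points of the open-chain AND-OR network. -/
noncomputable def F (ops : List Bool) : ℕ :=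
  Nat.card {x : Fin (ops.length + 2) → Bool // chainMap ops x = x}

/-- Run-length encoding: block `j` (1-based) consists of `k_j` copies of
`true` if `j` is odd and `false` if `j` is even. -/
def runOps : List ℕ → List Bool
  | [] => []
  | k :: t => List.replicate k true ++ (runOps t).map (fun b => !b)

/-- `Fr L` = 𝔉(L), the number of fixed points of the open-chain AND-OR
network with run-length list `L`. -/
noncomputable def Fr (L : List ℕ) : ℕ := F (runOps L)

/-- The closed-chain AND-OR network map on `ZMod n` determined by
`ops : ZMod n → Bool` (`true` = AND, `false` = OR). -/
def cycleMap {n : ℕ} (ops : ZMod n → Bool) (x : ZMod n → Bool) :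
    ZMod n → Bool := fun i =>
  if ops i then x (i - 1) && x (i + 1) else x (i - 1) || x (i + 1)

/-- `Fc ops` is the number of fixed points of the closed-chain AND-OR network. -/
noncomputable def Fc {n : ℕ} (ops : ZMod n → Bool) : ℕ :=
  Nat.card {x : ZMod n → Bool // cycleMap ops x = x}

/-- The cyclic operator assignment for run-length list `L`: going cyclically
from index `0`, a block of `k_j` consecutive values equal to `true` if `j` is
odd and `false` if `j` is even. -/
def cOps (L : List ℕ) : ZMod L.sum → Bool :=
  fun i => (runOps L).getD i.val false

/-- `Frc L` = 𝔉c(L), the number of fixed points of the closed-chain AND-OR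
network with run-length list `L`. -/
noncomputable def Frc (L : List ℕ) : ℕ := Fc (cOps L)

/-- for `m ≥ 6` even and the closed-chain run-length list
`[2, k₂, …, k_m]` (here written `2 :: a :: b :: M ++ [d, c]`, with
`a = k₂`, `b = k₃`, `M = [k₄, …, k_{m-2}]`, `d = k_{m-1}`, `c = k_m`),
`𝔉c([2,k₂,…,k_m]) = 𝔉(k₂-1,k₃,…,k_{m-1},k_m-1) + 𝔉(k₃-1,k₄,…,k_{m-2},k_{m-1}-1)`. -/
-- ############ helpers ############

lemma ao_runOps_length (L : List ℕ) : (runOps L).length = L.sum := by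
  induction L with
  | nil => rfl
  | cons k t ih => simp [runOps, ih]

lemma ao_runOps_concat (L : List ℕ) (v : ℕ) :
    runOps (L ++ [v]) = runOps L ++ List.replicate v (decide (Even L.length)) := by
  induction L with
  | nil => simp [runOps]
  | cons k t ih =>
      have hb : decide (Even (t.length + 1)) = (!(decide (Even t.length))) := by
        simp only [Nat.even_add_one, decide_not]
      simp [runOps, ih, hb, List.map_append]

lemma ao_getD_replicate {v k : ℕ} {b d : Bool} (h : k < v) :
    (List.replicate v b).getD k d = b := by
  rw [List.getD_eq_getElem _ _ (by simpa using h)]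
  simp

lemma ao_getD_map_not (P : List Bool) (m : ℕ) (h : m < P.length) :
    (P.map (fun b => !b)).getD m false = !(P.getD m false) := by
  rw [List.getD_eq_getElem _ _ (by simpa using h), List.getD_eq_getElem _ _ h]
  simp

def aoExt {L : ℕ} (y : Fin L → Bool) : ℕ → Bool := fun m => if h : m < L then y ⟨m, h⟩ else false

lemma ao_chainMap_apply (ops : List Bool) (y : Fin (ops.length + 2) → Bool)
    (k : ℕ) (hk : k < ops.length + 2) :
    chainMap ops y ⟨k, hk⟩ =
      if k = 0 then aoExt y 1
      else if k = ops.length + 1 then aoExt y ops.length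
      else if ops.getD (k-1) false then aoExt y (k-1) && aoExt y (k+1)
      else aoExt y (k-1) || aoExt y (k+1) := by
  by_cases h0 : k = 0
  · subst h0
    simp only [chainMap, aoExt]
    rw [dif_pos trivial, if_pos trivial, dif_pos (by omega)]
  · by_cases h1 : k = ops.length + 1
    · simp only [chainMap, Fin.val_mk, aoExt]
      rw [dif_neg h0, dif_pos h1, if_neg h0, if_pos h1, dif_pos (by omega)]
    · simp only [chainMap, Fin.val_mk, aoExt]
      rw [dif_neg h0, dif_neg h1, if_neg h0, if_neg h1]
      have hg : ops.get ⟨k-1, by omega⟩ = ops.getD (k-1) false := by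
        rw [List.getD_eq_getElem _ _ (by omega)]; rfl
      rw [hg, dif_pos (by omega), dif_pos (by omega)]

lemma ao_chain_fix_iff (ops : List Bool) (y : Fin (ops.length + 2) → Bool) :
    chainMap ops y = y ↔ ∀ k, k < ops.length + 2 →
      aoExt y k = if k = 0 then aoExt y 1
      else if k = ops.length + 1 then aoExt y ops.length
      else if ops.getD (k-1) false then aoExt y (k-1) && aoExt y (k+1)
      else aoExt y (k-1) || aoExt y (k+1) := by
  constructor
  · intro h k hk
    have h2 := ao_chainMap_apply ops y k hk
    rw [h] at h2
    rw [← h2, aoExt, dif_pos hk]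
  · intro h
    funext i
    obtain ⟨k, hk⟩ := i
    rw [ao_chainMap_apply ops y k hk]
    have := h k hk
    rw [aoExt, dif_pos hk] at this
    exact this.symm

lemma ao_cast_nm1 {N : ℕ} [NeZero N] : ((N - 1 : ℕ) : ZMod N) = -1 := by
  have h1 : 1 ≤ N := Nat.one_le_iff_ne_zero.mpr (NeZero.ne N)
  have : ((N - 1 : ℕ) : ZMod N) + 1 = ((N : ℕ) : ZMod N) := by
    rw [← Nat.cast_add_one, Nat.sub_add_cancel h1]
  rw [ZMod.natCast_self] at this
  linear_combination this

lemma ao_cast_pred {N : ℕ} [NeZero N] (k : ℕ) :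
    ((if k = 0 then N - 1 else k - 1 : ℕ) : ZMod N) = (k : ZMod N) - 1 := by
  by_cases h : k = 0
  · subst h; rw [if_pos rfl, ao_cast_nm1]; push_cast; ring
  · rw [if_neg h]
    have : k = (k - 1) + 1 := by omega
    conv_rhs => rw [this]
    push_cast; ring

lemma ao_cast_succ {N : ℕ} [NeZero N] (k : ℕ) (hk : k < N) :
    ((if k = N - 1 then 0 else k + 1 : ℕ) : ZMod N) = (k : ZMod N) + 1 := by
  by_cases h : k = N - 1
  · subst h; rw [if_pos rfl, Nat.cast_zero]
    have := ao_cast_nm1 (N := N)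
    rw [this]; ring
  · rw [if_neg h]; push_cast; ring

lemma ao_val_cast {N : ℕ} [NeZero N] (k : ℕ) (hk : k < N) : ((k : ZMod N)).val = k := by
  rw [ZMod.val_natCast, Nat.mod_eq_of_lt hk]

lemma ao_cast_val {N : ℕ} [NeZero N] (i : ZMod N) : ((i.val : ℕ) : ZMod N) = i :=
  (ZMod.natCast_val i).trans (ZMod.cast_id _ _)

lemma ao_cycle_fix_iff {N : ℕ} [NeZero N] (ops : ZMod N → Bool) (x : ZMod N → Bool) :
    cycleMap ops x = x ↔ ∀ k, k < N →
      x (k : ZMod N) = if ops (k : ZMod N)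
        then x ((if k = 0 then N - 1 else k - 1 : ℕ) : ZMod N) &&
             x ((if k = N - 1 then 0 else k + 1 : ℕ) : ZMod N)
        else x ((if k = 0 then N - 1 else k - 1 : ℕ) : ZMod N) ||
             x ((if k = N - 1 then 0 else k + 1 : ℕ) : ZMod N) := by
  constructor
  · intro h k hk
    have := congrFun h (k : ZMod N)
    rw [cycleMap] at this
    rw [← this, ao_cast_pred, ao_cast_succ k hk]
  · intro h
    funext i
    have := h i.val i.val_lt
    rw [ao_cast_pred, ao_cast_succ i.val i.val_lt, ao_cast_val] at this
    rw [cycleMap, ← this]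

lemma ao_getD_append_block (l l' : List Bool) (k : ℕ) :
    (l ++ l').getD k false = if k < l.length then l.getD k false else l'.getD (k - l.length) false := by
  by_cases h : k < l.length
  · rw [if_pos h, List.getD_append _ _ _ _ h]
  · rw [if_neg h, List.getD_append_right _ _ _ _ (Nat.le_of_not_lt h)]

lemma ao_getD_rep (v : ℕ) (bv : Bool) (m : ℕ) :
    (List.replicate v bv).getD m false = if m < v then bv else false := by
  by_cases h : m < v
  · rw [if_pos h, ao_getD_replicate h]
  · rw [if_neg h, List.getD_eq_default]
    simpa using Nat.le_of_not_lt h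

lemma ao_app2 (M : List ℕ) (hModd : Odd M.length) (u v : ℕ) :
    runOps (M ++ [u, v]) = runOps M ++ (List.replicate u false ++ List.replicate v true) := by
  have h1 : M ++ [u, v] = (M ++ [u]) ++ [v] := by simp
  have e1 : decide (Even M.length) = false := by
    simp [Nat.not_even_iff_odd]; exact hModd
  have e2 : decide (Even ((M ++ [u]).length)) = true := by
    rw [List.length_append]
    simp only [decide_eq_true_eq, List.length_cons, List.length_nil]
    exact hModd.add_one
  rw [h1, ao_runOps_concat, ao_runOps_concat, e1, e2, List.append_assoc]

lemma ao_app1 (M : List ℕ) (hModd : Odd M.length) (u : ℕ) :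
    runOps (M ++ [u]) = runOps M ++ List.replicate u false := by
  have e1 : decide (Even M.length) = false := by
    simp [Nat.not_even_iff_odd]; exact hModd
  rw [ao_runOps_concat, e1]

lemma ao_run3 (b u v : ℕ) (M : List ℕ) (hModd : Odd M.length) :
    runOps (b :: (M ++ [u, v])) = List.replicate b true ++
      ((runOps M).map (fun x => !x) ++ (List.replicate u true ++ List.replicate v false)) := by
  rw [runOps, ao_app2 M hModd]
  simp [List.map_append]

lemma ao_map_not_not (l : List Bool) : l.map ((fun b : Bool => !b) ∘ fun b => !b) = l := by
  simp only [Function.comp_def, Bool.not_not, List.map_id']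

lemma ao_run4 (e b u v : ℕ) (M : List ℕ) (hModd : Odd M.length) :
    runOps (e :: b :: (M ++ [u, v])) = List.replicate e true ++
      (List.replicate b false ++ (runOps M ++ (List.replicate u false ++ List.replicate v true))) := by
  rw [runOps, ao_run3 b u v M hModd]
  simp [List.map_append, List.map_map, ao_map_not_not]

lemma ao_full (a b c d : ℕ) (M : List ℕ) (hModd : Odd M.length) :
    runOps (2 :: a :: b :: (M ++ [d, c])) = List.replicate 2 true ++
      (List.replicate a false ++ (List.replicate b true ++
        ((runOps M).map (fun x => !x) ++ (List.replicate d true ++ List.replicate c false)))) := by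
  rw [runOps, ao_run4 a b d c M hModd]
  simp [List.map_append, List.map_map, ao_map_not_not]

lemma ao_ops2eq (b d : ℕ) (M : List ℕ) (hModd : Odd M.length) :
    runOps ((b-1) :: (M ++ [d-1])) = List.replicate (b-1) true ++
      ((runOps M).map (fun x => !x) ++ List.replicate (d-1) true) := by
  rw [runOps, ao_app1 M hModd]
  simp [List.map_append]

lemma ao_gfull (a b c d S : ℕ) (Qm : List Bool) (hQ : Qm.length = S) (k : ℕ) :
    (List.replicate 2 true ++ (List.replicate a false ++ (List.replicate b true ++
      (Qm ++ (List.replicate d true ++ List.replicate c false))))).getD k false =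
    (if k < 2 then true
    else if k < 2 + a then false
    else if k < 2 + a + b then true
    else if k < 2 + a + b + S then Qm.getD (k - (2+a+b)) false
    else if k < 2 + a + b + S + d then true
    else false) := by
  simp only [ao_getD_append_block, ao_getD_rep, List.length_replicate, hQ]
  split_ifs <;> first | rfl | omega | (congr 1; omega)

lemma ao_gops1 (a1 b c1 d S : ℕ) (Pm : List Bool) (hP : Pm.length = S) (k : ℕ) :
    (List.replicate a1 true ++ (List.replicate b false ++ (Pm ++
      (List.replicate d false ++ List.replicate c1 true)))).getD k false =
    (if k < a1 then true
    else if k < a1 + b then false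
    else if k < a1 + b + S then Pm.getD (k - (a1+b)) false
    else if k < a1 + b + S + d then false
    else if k < a1 + b + S + d + c1 then true
    else false) := by
  simp only [ao_getD_append_block, ao_getD_rep, List.length_replicate, hP]
  split_ifs <;> first | rfl | omega | (congr 1; omega)

lemma ao_gops2 (b1 d1 S : ℕ) (Qm : List Bool) (hQ : Qm.length = S) (k : ℕ) :
    (List.replicate b1 true ++ (Qm ++ List.replicate d1 true)).getD k false =
    (if k < b1 then true
    else if k < b1 + S then Qm.getD (k - b1) false
    else if k < b1 + S + d1 then true
    else false) := by
  simp only [ao_getD_append_block, ao_getD_rep, List.length_replicate, hQ]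
  split_ifs <;> first | rfl | omega | (congr 1; omega)

lemma ao_rel1 (a b c d S : ℕ) (Pm : List Bool) (hP : Pm.length = S)
    (ha : 1 ≤ a) (hb : 1 ≤ b) (hc : 1 ≤ c) (hd : 1 ≤ d) (hS : 1 ≤ S)
    (k : ℕ) (h3 : 3 ≤ k) (h2 : k ≤ a + b + S + d + c) :
    (List.replicate 2 true ++ (List.replicate a false ++ (List.replicate b true ++
      ((Pm.map (fun x => !x)) ++ (List.replicate d true ++ List.replicate c false))))).getD k false
    = !((List.replicate (a-1) true ++ (List.replicate b false ++ (Pm ++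
      (List.replicate d false ++ List.replicate (c-1) true)))).getD (k-3) false) := by
  rw [ao_gfull a b c d S (Pm.map (fun x => !x)) (by simpa using hP) k,
      ao_gops1 (a-1) b (c-1) d S Pm hP (k-3)]
  split_ifs <;> first
    | rfl
    | omega
    | (rw [show k - 3 - (a-1+b) = k - (2+a+b) from by omega,
           ao_getD_map_not Pm _ (by omega)])

lemma ao_rel2 (a b c d S : ℕ) (Pm : List Bool) (hP : Pm.length = S)
    (ha : 1 ≤ a) (hb : 1 ≤ b) (hc : 1 ≤ c) (hd : 1 ≤ d) (hS : 1 ≤ S)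
    (k : ℕ) (hlow : a + 3 ≤ k) (hhigh : k ≤ a + b + S + d) :
    (List.replicate 2 true ++ (List.replicate a false ++ (List.replicate b true ++
      ((Pm.map (fun x => !x)) ++ (List.replicate d true ++ List.replicate c false))))).getD k false
    = (List.replicate (b-1) true ++ ((Pm.map (fun x => !x)) ++
        List.replicate (d-1) true)).getD (k - (a+3)) false := by
  rw [ao_gfull a b c d S (Pm.map (fun x => !x)) (by simpa using hP) k,
      ao_gops2 (b-1) (d-1) S (Pm.map (fun x => !x)) (by simpa using hP) (k - (a+3))]
  split_ifs <;> first
    | rfl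
    | omega
    | (congr 1; omega)

theorem andor_closed_chain_recursion_two (a b c d : ℕ) (M : List ℕ)
    (ha : 1 ≤ a) (hb : 1 ≤ b) (hc : 1 ≤ c) (hd : 1 ≤ d)
    (hM : ∀ k ∈ M, 1 ≤ k) (hMlen : 1 ≤ M.length) (hModd : Odd M.length) :
    Frc (2 :: a :: b :: M ++ [d, c]) =
      Fr ((a - 1) :: b :: M ++ [d, c - 1]) + Fr ((b - 1) :: M ++ [d - 1]) := by
  classical
  have hS : 1 ≤ M.sum := by
    rcases M with _ | ⟨k, t⟩
    · simp at hMlen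
    · have hk := hM k List.mem_cons_self
      simp only [List.sum_cons]; omega
  have hP : (runOps M).length = M.sum := ao_runOps_length M
  unfold Frc Fc Fr F
  set N := (2 :: a :: b :: M ++ [d, c]).sum with hNdef
  have hN : N = a + b + c + d + M.sum + 2 := by
    rw [hNdef]; simp [List.sum_append]; omega
  haveI : NeZero N := ⟨by omega⟩
  -- getD facts
  have gfull : ∀ k : ℕ, (runOps (2 :: a :: b :: M ++ [d, c])).getD k false =
      (if k < 2 then true
       else if k < 2 + a then false
       else if k < 2 + a + b then true
       else if k < 2 + a + b + M.sum then ((runOps M).map (fun x => !x)).getD (k - (2+a+b)) false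
       else if k < 2 + a + b + M.sum + d then true
       else false) := by
    intro k
    rw [show (2 :: a :: b :: M ++ [d, c]) = 2 :: a :: b :: (M ++ [d, c]) from rfl,
       ao_full a b c d M hModd]
    exact ao_gfull a b c d M.sum _ (by simpa using hP) k
  have grel1 : ∀ k, 3 ≤ k → k ≤ a + b + M.sum + d + c →
      (runOps (2 :: a :: b :: M ++ [d, c])).getD k false
        = !((runOps ((a-1) :: b :: M ++ [d, c-1])).getD (k-3) false) := by
    intro k h3 h2
    rw [show (2 :: a :: b :: M ++ [d, c]) = 2 :: a :: b :: (M ++ [d, c]) from rfl,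
        ao_full a b c d M hModd,
        show ((a-1) :: b :: M ++ [d, c-1]) = (a-1) :: b :: (M ++ [d, c-1]) from rfl,
        ao_run4 (a-1) b d (c-1) M hModd]
    exact ao_rel1 a b c d M.sum (runOps M) hP ha hb hc hd hS k h3 h2
  have grel2 : ∀ k, a + 3 ≤ k → k ≤ a + b + M.sum + d →
      (runOps (2 :: a :: b :: M ++ [d, c])).getD k false
        = (runOps ((b-1) :: M ++ [d-1])).getD (k - (a+3)) false := by
    intro k h1 h2
    rw [show (2 :: a :: b :: M ++ [d, c]) = 2 :: a :: b :: (M ++ [d, c]) from rfl,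
        ao_full a b c d M hModd,
        show ((b-1) :: M ++ [d-1]) = (b-1) :: (M ++ [d-1]) from rfl,
        ao_ops2eq b d M hModd]
    exact ao_rel2 a b c d M.sum (runOps M) hP ha hb hc hd hS k h1 h2
  have gops1len : (runOps ((a-1) :: b :: M ++ [d, c-1])).length = N - 4 := by
    rw [ao_runOps_length]; simp [List.sum_append]; omega
  have gops2len : (runOps ((b-1) :: M ++ [d-1])).length = b + M.sum + d - 2 := by
    rw [ao_runOps_length]; simp [List.sum_append]; omega
  -- specialized cycle fixed-point criterion
  have cyc : ∀ x : ZMod N → Bool, cycleMap (cOps (2 :: a :: b :: M ++ [d, c])) x = x ↔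
      ∀ k, k < N → x ((k : ℕ) : ZMod N) =
        if (runOps (2 :: a :: b :: M ++ [d, c])).getD k false
        then x (((if k = 0 then N - 1 else k - 1) : ℕ) : ZMod N) &&
             x (((if k = N - 1 then 0 else k + 1) : ℕ) : ZMod N)
        else x (((if k = 0 then N - 1 else k - 1) : ℕ) : ZMod N) ||
             x (((if k = N - 1 then 0 else k + 1) : ℕ) : ZMod N) := by
    intro x
    rw [ao_cycle_fix_iff]
    refine forall_congr' fun k => imp_congr_right fun hk => ?_
    have hop : cOps (2 :: a :: b :: M ++ [d, c]) ((k:ℕ) : ZMod N)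
        = (runOps (2 :: a :: b :: M ++ [d, c])).getD k false := by
      show (runOps _).getD (((k:ℕ) : ZMod N)).val false = _
      rw [ao_val_cast k hk]
    rw [hop]
  -- value of x at 1 when x 0 = false
  have x1false : ∀ x : ZMod N → Bool, cycleMap (cOps (2 :: a :: b :: M ++ [d, c])) x = x →
      x 0 = false → x ((1:ℕ) : ZMod N) = false := by
    intro x hx hx0
    have hx0' : x ((0:ℕ) : ZMod N) = false := by rw [Nat.cast_zero]; exact hx0
    have C1 := (cyc x).mp hx 1 (by omega)
    have g : (runOps (2 :: a :: b :: M ++ [d, c])).getD 1 false = true := by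
      rw [gfull]; norm_num
    rw [g] at C1
    simp only [if_pos rfl, if_neg (show ¬(1 : ℕ) = 0 from by omega),
      if_neg (show ¬(1 : ℕ) = N - 1 from by omega)] at C1
    rw [show ((1-1 : ℕ) : ZMod N) = ((0:ℕ) : ZMod N) from by norm_num, hx0'] at C1
    simpa using C1
  -- case A : cycle fixed point with x 0 = false gives a chain₁ fixed point
  have mkChain1 : ∀ x : ZMod N → Bool, cycleMap (cOps (2 :: a :: b :: M ++ [d, c])) x = x →
      x 0 = false →
      chainMap (runOps ((a-1) :: b :: M ++ [d, c-1]))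
        (fun j : Fin ((runOps ((a-1) :: b :: M ++ [d, c-1])).length + 2) =>
          !x ((j.val + 2 : ℕ) : ZMod N))
      = (fun j => !x ((j.val + 2 : ℕ) : ZMod N)) := by
    intro x hx hx0
    have hx0' : x ((0:ℕ) : ZMod N) = false := by rw [Nat.cast_zero]; exact hx0
    have hx1 := x1false x hx hx0
    have C := (cyc x).mp hx
    rw [ao_chain_fix_iff]
    intro k hk
    have extEq : ∀ m, m < (runOps ((a-1) :: b :: M ++ [d, c-1])).length + 2 →
        aoExt (fun j : Fin ((runOps ((a-1) :: b :: M ++ [d, c-1])).length + 2) =>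
            !x ((j.val + 2 : ℕ) : ZMod N)) m
          = !x ((m + 2 : ℕ) : ZMod N) := by
      intro m hm; simp only [aoExt]; rw [dif_pos hm]
    by_cases hk0 : k = 0
    · subst hk0
      rw [if_pos rfl, extEq 0 (by omega), extEq 1 (by omega)]
      have C2 := C 2 (by omega)
      have g : (runOps (2 :: a :: b :: M ++ [d, c])).getD 2 false = false := by
        rw [gfull]
        rw [if_neg (show ¬(2:ℕ) < 2 from by omega), if_pos (show (2:ℕ) < 2 + a from by omega)]
      rw [g] at C2
      simp only [if_neg (show ¬(false = true) from by simp),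
        if_neg (show ¬(2 : ℕ) = 0 from by omega),
        if_neg (show ¬(2 : ℕ) = N - 1 from by omega)] at C2
      rw [show ((2-1 : ℕ) : ZMod N) = ((1:ℕ) : ZMod N) from by norm_num, hx1,
          Bool.false_or] at C2
      rw [show ((0+2 : ℕ) : ZMod N) = ((2:ℕ) : ZMod N) from by norm_num,
          show ((1+2 : ℕ) : ZMod N) = ((2+1:ℕ) : ZMod N) from by norm_num, C2]
    · by_cases hkL : k = (runOps ((a-1) :: b :: M ++ [d, c-1])).length + 1
      · rw [if_neg hk0, if_pos hkL, extEq k hk, extEq _ (by omega)]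
        have CL := C (N-1) (by omega)
        have g : (runOps (2 :: a :: b :: M ++ [d, c])).getD (N-1) false = false := by
          rw [gfull]
          rw [if_neg (show ¬(N-1) < 2 from by omega),
              if_neg (show ¬(N-1) < 2 + a from by omega),
              if_neg (show ¬(N-1) < 2 + a + b from by omega),
              if_neg (show ¬(N-1) < 2 + a + b + M.sum from by omega),
              if_neg (show ¬(N-1) < 2 + a + b + M.sum + d from by omega)]
        rw [g] at CL
        simp only [if_neg (show ¬(false = true) from by simp),
          if_neg (show ¬(N - 1 : ℕ) = 0 from by omega), if_pos (show (N-1 : ℕ) = N - 1 from rfl),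
          if_true] at CL
        rw [Nat.cast_zero, hx0, Bool.or_false] at CL
        rw [show (k + 2 : ℕ) = N - 1 from by omega,
            show ((runOps ((a-1) :: b :: M ++ [d, c-1])).length + 2 : ℕ) = N - 1 - 1 from by omega,
            CL]
      · rw [if_neg hk0, if_neg hkL]
        have Ck := C (k+2) (by omega)
        have g := grel1 (k+2) (by omega) (by omega)
        rw [show k+2-3 = k-1 from by omega] at g
        rw [g] at Ck
        simp only [if_neg (show ¬(k + 2 : ℕ) = 0 from by omega),
          if_neg (show ¬(k + 2 : ℕ) = N - 1 from by omega)] at Ck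
        rw [show (k+2-1 : ℕ) = k-1+2 from by omega,
            show (k+2+1 : ℕ) = k+1+2 from by omega] at Ck
        rw [extEq k hk, extEq (k-1) (by omega), extEq (k+1) (by omega)]
        cases ht : (runOps ((a-1) :: b :: M ++ [d, c-1])).getD (k-1) false
        · rw [if_neg (show ¬(false = true) from by simp)]
          rw [ht] at Ck
          simp only [Bool.not_false, if_true] at Ck
          rw [Ck]
          cases x ((k-1+2 : ℕ) : ZMod N) <;> cases x ((k+1+2 : ℕ) : ZMod N) <;> simp
        · rw [if_pos rfl]
          rw [ht] at Ck
          simp only [Bool.not_true] at Ck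
          rw [if_neg (show ¬(false = true) from by simp)] at Ck
          rw [Ck]
          cases x ((k-1+2 : ℕ) : ZMod N) <;> cases x ((k+1+2 : ℕ) : ZMod N) <;> simp
  -- case A inverse : chain₁ fixed point gives cycle fixed point with x 0 = false
  have mkCycle1 : ∀ y : Fin ((runOps ((a-1) :: b :: M ++ [d, c-1])).length + 2) → Bool,
      chainMap (runOps ((a-1) :: b :: M ++ [d, c-1])) y = y →
      cycleMap (cOps (2 :: a :: b :: M ++ [d, c]))
        (fun i : ZMod N => if i.val < 2 then false else !(aoExt y (i.val - 2)))
        = (fun i : ZMod N => if i.val < 2 then false else !(aoExt y (i.val - 2))) := by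
    intro y hy
    have W := (ao_chain_fix_iff _ y).mp hy
    rw [cyc]
    intro k hk
    try beta_reduce
    have xval : ∀ m, m < N →
        (if (((m:ℕ):ZMod N)).val < 2 then false else !(aoExt y ((((m:ℕ):ZMod N)).val - 2)))
          = (if m < 2 then false else !(aoExt y (m - 2))) := by
      intro m hm; rw [ao_val_cast m hm]
    by_cases hk0 : k = 0
    · subst hk0
      simp only [if_pos rfl, if_true, if_neg (show ¬(0:ℕ) = N - 1 from by omega)]
      rw [xval 0 (by omega), xval (N-1) (by omega), xval (0+1) (by omega)]
      have g : (runOps (2 :: a :: b :: M ++ [d, c])).getD 0 false = true := by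
        rw [gfull]; norm_num
      rw [g, if_pos rfl,
          if_pos (show (0:ℕ) < 2 from by omega), if_pos (show (0+1:ℕ) < 2 from by omega),
          Bool.and_false]
    · by_cases hk1 : k = 1
      · subst hk1
        simp only [if_neg (show ¬(1:ℕ) = 0 from by omega),
          if_neg (show ¬(1:ℕ) = N - 1 from by omega)]
        rw [xval 1 (by omega), xval (1-1) (by omega), xval (1+1) (by omega)]
        have g : (runOps (2 :: a :: b :: M ++ [d, c])).getD 1 false = true := by
          rw [gfull]; norm_num
        rw [g, if_pos rfl,
            if_pos (show (1:ℕ) < 2 from by omega), if_pos (show (1-1:ℕ) < 2 from by omega),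
            Bool.false_and]
      · by_cases hk2 : k = 2
        · subst hk2
          simp only [if_neg (show ¬(2:ℕ) = 0 from by omega),
            if_neg (show ¬(2:ℕ) = N - 1 from by omega)]
          rw [xval 2 (by omega), xval (2-1) (by omega), xval (2+1) (by omega)]
          have g : (runOps (2 :: a :: b :: M ++ [d, c])).getD 2 false = false := by
            rw [gfull]
            rw [if_neg (show ¬(2:ℕ) < 2 from by omega),
                if_pos (show (2:ℕ) < 2 + a from by omega)]
          rw [g, if_neg (show ¬(false = true) from by simp),
              if_neg (show ¬(2:ℕ) < 2 from by omega), if_pos (show (2-1:ℕ) < 2 from by omega),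
              if_neg (show ¬(2+1:ℕ) < 2 from by omega), Bool.false_or]
          have W0 := W 0 (by omega)
          rw [if_pos rfl] at W0
          rw [show (2-2:ℕ) = 0 from rfl, show (2+1-2:ℕ) = 1 from rfl, W0]
        · by_cases hkN : k = N - 1
          · subst hkN
            simp only [if_neg (show ¬(N-1:ℕ) = 0 from by omega), if_pos rfl, if_true]
            rw [xval (N-1) (by omega), xval (N-1-1) (by omega), xval 0 (by omega)]
            have g : (runOps (2 :: a :: b :: M ++ [d, c])).getD (N-1) false = false := by
              rw [gfull]
              rw [if_neg (show ¬(N-1) < 2 from by omega),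
                  if_neg (show ¬(N-1) < 2 + a from by omega),
                  if_neg (show ¬(N-1) < 2 + a + b from by omega),
                  if_neg (show ¬(N-1) < 2 + a + b + M.sum from by omega),
                  if_neg (show ¬(N-1) < 2 + a + b + M.sum + d from by omega)]
            rw [g, if_neg (show ¬(false = true) from by simp),
                if_neg (show ¬(N-1) < 2 from by omega),
                if_neg (show ¬(N-1-1) < 2 from by omega),
                if_pos (show (0:ℕ) < 2 from by omega), Bool.or_false]
            have WL := W ((runOps ((a-1) :: b :: M ++ [d, c-1])).length + 1) (by omega)
            rw [if_neg (show ¬((runOps ((a-1) :: b :: M ++ [d, c-1])).length + 1 = 0) from by omega),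
                if_pos rfl] at WL
            rw [show (N-1-2 : ℕ) = (runOps ((a-1) :: b :: M ++ [d, c-1])).length + 1 from by omega,
                show (N-1-1-2 : ℕ) = (runOps ((a-1) :: b :: M ++ [d, c-1])).length from by omega,
                WL]
          · simp only [if_neg hk0, if_neg hkN]
            rw [xval k hk, xval (k-1) (by omega), xval (k+1) (by omega)]
            have g := grel1 k (by omega) (by omega)
            rw [g, if_neg (show ¬ k < 2 from by omega), if_neg (show ¬ k-1 < 2 from by omega),
                if_neg (show ¬ k+1 < 2 from by omega)]
            have Wk := W (k-2) (by omega)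
            rw [if_neg (show ¬(k-2 = 0) from by omega),
                if_neg (show ¬(k-2 = (runOps ((a-1) :: b :: M ++ [d, c-1])).length + 1) from by omega)] at Wk
            rw [show (k-1-2 : ℕ) = k-3 from by omega, show (k+1-2 : ℕ) = k-1 from by omega]
            rw [show (k-2-1 : ℕ) = k-3 from by omega, show (k-2+1 : ℕ) = k-1 from by omega] at Wk
            cases ht : (runOps ((a-1) :: b :: M ++ [d, c-1])).getD (k-3) false
            · rw [ht] at Wk
              rw [if_neg (show ¬(false = true) from by simp)] at Wk
              simp only [Bool.not_false, if_true]
              rw [Wk]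
              cases aoExt y (k-3) <;> cases aoExt y (k-1) <;> simp
            · rw [ht] at Wk
              rw [if_pos rfl] at Wk
              simp only [Bool.not_true]
              rw [if_neg (show ¬(false = true) from by simp), Wk]
              cases aoExt y (k-3) <;> cases aoExt y (k-1) <;> simp
  -- values forced when x 0 = true
  have bvals : ∀ x : ZMod N → Bool, cycleMap (cOps (2 :: a :: b :: M ++ [d, c])) x = x →
      x 0 = true →
      x ((1:ℕ):ZMod N) = true ∧ x ((N-1:ℕ):ZMod N) = true ∧
      (∀ k, 2 ≤ k → k ≤ a+1 → x ((k:ℕ):ZMod N) = true) ∧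
      (∀ t, t ≤ c-1 → x ((N-1-t : ℕ):ZMod N) = true) := by
    intro x hx hx0
    have hx0' : x ((0:ℕ):ZMod N) = true := by rw [Nat.cast_zero]; exact hx0
    have C := (cyc x).mp hx
    have C0 := C 0 (by omega)
    simp only [if_pos rfl, if_true, if_neg (show ¬(0:ℕ) = N-1 from by omega)] at C0
    have g0 : (runOps (2 :: a :: b :: M ++ [d, c])).getD 0 false = true := by
      rw [gfull]; norm_num
    rw [g0, if_pos rfl, hx0'] at C0
    have hb0 := (Bool.and_eq_true _ _).mp C0.symm
    have hxN1 : x ((N-1:ℕ):ZMod N) = true := hb0.1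
    have hx1 : x ((1:ℕ):ZMod N) = true := by
      have h := hb0.2
      rwa [show ((0+1:ℕ):ZMod N) = ((1:ℕ):ZMod N) from by norm_num] at h
    have C1 := C 1 (by omega)
    simp only [if_neg (show ¬(1:ℕ) = 0 from by omega),
      if_neg (show ¬(1:ℕ) = N-1 from by omega)] at C1
    have g1 : (runOps (2 :: a :: b :: M ++ [d, c])).getD 1 false = true := by
      rw [gfull]; norm_num
    rw [g1, if_pos rfl, hx1] at C1
    have hb1 := (Bool.and_eq_true _ _).mp C1.symm
    have hx2 : x ((2:ℕ):ZMod N) = true := by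
      have h := hb1.2
      rwa [show ((1+1:ℕ):ZMod N) = ((2:ℕ):ZMod N) from by norm_num] at h
    have hLf : ∀ k, 2 ≤ k → k ≤ a+1 → x ((k:ℕ):ZMod N) = true := by
      intro k
      induction k with
      | zero => omega
      | succ n ih =>
        intro h2 hle
        by_cases hn2 : n + 1 = 2
        · rw [hn2]; exact hx2
        · have Ck := C (n+1) (by omega)
          simp only [if_neg (show ¬(n+1 = 0) from by omega),
            if_neg (show ¬(n+1 = N-1) from by omega)] at Ck
          have g : (runOps (2 :: a :: b :: M ++ [d, c])).getD (n+1) false = false := by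
            rw [gfull]
            rw [if_neg (show ¬ n+1 < 2 from by omega),
                if_pos (show n+1 < 2 + a from by omega)]
          rw [g, if_neg (show ¬(false=true) from by simp)] at Ck
          rw [show (n+1-1 : ℕ) = n from by omega, ih (by omega) (by omega), Bool.true_or] at Ck
          exact Ck
    have hRf : ∀ t, t ≤ c-1 → x ((N-1-t : ℕ):ZMod N) = true := by
      intro t
      induction t with
      | zero => intro _; simpa using hxN1
      | succ n ih =>
        intro hle
        have Ck := C (N-1-(n+1)) (by omega)
        simp only [if_neg (show ¬(N-1-(n+1) = 0) from by omega),
          if_neg (show ¬(N-1-(n+1) = N-1) from by omega)] at Ck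
        have g : (runOps (2 :: a :: b :: M ++ [d, c])).getD (N-1-(n+1)) false = false := by
          rw [gfull]
          rw [if_neg (show ¬(N-1-(n+1)) < 2 from by omega),
              if_neg (show ¬(N-1-(n+1)) < 2 + a from by omega),
              if_neg (show ¬(N-1-(n+1)) < 2 + a + b from by omega),
              if_neg (show ¬(N-1-(n+1)) < 2 + a + b + M.sum from by omega),
              if_neg (show ¬(N-1-(n+1)) < 2 + a + b + M.sum + d from by omega)]
        rw [g, if_neg (show ¬(false=true) from by simp)] at Ck
        rw [show (N-1-(n+1)+1 : ℕ) = N-1-n from by omega, ih (by omega), Bool.or_true] at Ck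
        exact Ck
    exact ⟨hx1, hxN1, hLf, hRf⟩
  -- case B : cycle fixed point with x 0 = true gives a chain₂ fixed point
  have mkChain2 : ∀ x : ZMod N → Bool, cycleMap (cOps (2 :: a :: b :: M ++ [d, c])) x = x →
      x 0 = true →
      chainMap (runOps ((b-1) :: M ++ [d-1]))
        (fun j : Fin ((runOps ((b-1) :: M ++ [d-1])).length + 2) =>
          x ((j.val + (a+2) : ℕ) : ZMod N))
      = (fun j => x ((j.val + (a+2) : ℕ) : ZMod N)) := by
    intro x hx hx0
    obtain ⟨hx1, hxN1, hLf, hRf⟩ := bvals x hx hx0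
    have C := (cyc x).mp hx
    rw [ao_chain_fix_iff]
    intro k hk
    have extEq : ∀ m, m < (runOps ((b-1) :: M ++ [d-1])).length + 2 →
        aoExt (fun j : Fin ((runOps ((b-1) :: M ++ [d-1])).length + 2) =>
            x ((j.val + (a+2) : ℕ) : ZMod N)) m
          = x ((m + (a+2) : ℕ) : ZMod N) := by
      intro m hm; simp only [aoExt]; rw [dif_pos hm]
    by_cases hk0 : k = 0
    · subst hk0
      rw [if_pos rfl, extEq 0 (by omega), extEq 1 (by omega)]
      have Cb := C (a+2) (by omega)
      simp only [if_neg (show ¬(a+2 = 0) from by omega),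
        if_neg (show ¬(a+2 = N-1) from by omega)] at Cb
      have g : (runOps (2 :: a :: b :: M ++ [d, c])).getD (a+2) false = true := by
        rw [gfull]
        rw [if_neg (show ¬(a+2) < 2 from by omega),
            if_neg (show ¬(a+2) < 2 + a from by omega),
            if_pos (show (a+2) < 2 + a + b from by omega)]
      rw [g, if_pos rfl] at Cb
      have hprev : x ((a+2-1 : ℕ):ZMod N) = true := by
        rw [show (a+2-1:ℕ) = a+1 from by omega]
        exact hLf (a+1) (by omega) (by omega)
      rw [hprev, Bool.true_and] at Cb
      rw [show (0+(a+2) : ℕ) = a+2 from by omega,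
          show (1+(a+2) : ℕ) = a+2+1 from by omega, Cb]
    · by_cases hkL : k = (runOps ((b-1) :: M ++ [d-1])).length + 1
      · rw [if_neg hk0, if_pos hkL, extEq k hk,
            extEq ((runOps ((b-1) :: M ++ [d-1])).length) (by omega)]
        have CL := C (N-c-1) (by omega)
        simp only [if_neg (show ¬(N-c-1 = 0) from by omega),
          if_neg (show ¬(N-c-1 = N-1) from by omega)] at CL
        have g : (runOps (2 :: a :: b :: M ++ [d, c])).getD (N-c-1) false = true := by
          rw [gfull]
          rw [if_neg (show ¬(N-c-1) < 2 from by omega),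
              if_neg (show ¬(N-c-1) < 2 + a from by omega),
              if_neg (show ¬(N-c-1) < 2 + a + b from by omega),
              if_neg (show ¬(N-c-1) < 2 + a + b + M.sum from by omega),
              if_pos (show (N-c-1) < 2 + a + b + M.sum + d from by omega)]
        rw [g, if_pos rfl] at CL
        have hnext : x ((N-c-1+1 : ℕ):ZMod N) = true := by
          rw [show (N-c-1+1:ℕ) = N-1-(c-1) from by omega]
          exact hRf (c-1) (by omega)
        rw [hnext, Bool.and_true] at CL
        rw [show (k+(a+2) : ℕ) = N-c-1 from by omega,
            show ((runOps ((b-1) :: M ++ [d-1])).length + (a+2) : ℕ) = N-c-1-1 from by omega,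
            CL]
      · rw [if_neg hk0, if_neg hkL]
        have Cp := C (k+(a+2)) (by omega)
        simp only [if_neg (show ¬(k+(a+2) = 0) from by omega),
          if_neg (show ¬(k+(a+2) = N-1) from by omega)] at Cp
        have g := grel2 (k+(a+2)) (by omega) (by omega)
        rw [show (k+(a+2)-(a+3) : ℕ) = k-1 from by omega] at g
        rw [g] at Cp
        rw [show (k+(a+2)-1 : ℕ) = k-1+(a+2) from by omega,
            show (k+(a+2)+1 : ℕ) = k+1+(a+2) from by omega] at Cp
        rw [extEq k hk, extEq (k-1) (by omega), extEq (k+1) (by omega)]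
        exact Cp
  -- case B inverse
  have mkCycle2 : ∀ y : Fin ((runOps ((b-1) :: M ++ [d-1])).length + 2) → Bool,
      chainMap (runOps ((b-1) :: M ++ [d-1])) y = y →
      cycleMap (cOps (2 :: a :: b :: M ++ [d, c]))
        (fun i : ZMod N => if i.val < a+2 then true
          else if i.val < a+b+M.sum+d+2 then aoExt y (i.val - (a+2)) else true)
        = (fun i : ZMod N => if i.val < a+2 then true
            else if i.val < a+b+M.sum+d+2 then aoExt y (i.val - (a+2)) else true) := by
    intro y hy
    have W := (ao_chain_fix_iff _ y).mp hy
    rw [cyc]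
    intro k hk
    try beta_reduce
    have xval : ∀ m, m < N →
        (if (((m:ℕ):ZMod N)).val < a+2 then true
          else if (((m:ℕ):ZMod N)).val < a+b+M.sum+d+2 then aoExt y ((((m:ℕ):ZMod N)).val - (a+2)) else true)
          = (if m < a+2 then true else if m < a+b+M.sum+d+2 then aoExt y (m - (a+2)) else true) := by
      intro m hm; rw [ao_val_cast m hm]
    by_cases hk0 : k = 0
    · subst hk0
      simp only [if_pos rfl, if_true, if_neg (show ¬(0:ℕ) = N - 1 from by omega)]
      rw [xval 0 (by omega), xval (N-1) (by omega), xval (0+1) (by omega)]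
      have g : (runOps (2 :: a :: b :: M ++ [d, c])).getD 0 false = true := by
        rw [gfull]; norm_num
      rw [g, if_pos rfl, if_pos (show (0:ℕ) < a+2 from by omega),
          if_pos (show (0+1:ℕ) < a+2 from by omega),
          if_neg (show ¬(N-1) < a+2 from by omega),
          if_neg (show ¬(N-1) < a+b+M.sum+d+2 from by omega), Bool.true_and]
    · by_cases hk1 : k = 1
      · subst hk1
        simp only [if_neg (show ¬(1:ℕ) = 0 from by omega),
          if_neg (show ¬(1:ℕ) = N - 1 from by omega)]
        rw [xval 1 (by omega), xval (1-1) (by omega), xval (1+1) (by omega)]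
        have g : (runOps (2 :: a :: b :: M ++ [d, c])).getD 1 false = true := by
          rw [gfull]; norm_num
        rw [g, if_pos rfl, if_pos (show (1:ℕ) < a+2 from by omega),
            if_pos (show (1-1:ℕ) < a+2 from by omega),
            if_pos (show (1+1:ℕ) < a+2 from by omega), Bool.true_and]
      · by_cases hka : k ≤ a+1
        · simp only [if_neg hk0, if_neg (show ¬ k = N-1 from by omega)]
          rw [xval k hk, xval (k-1) (by omega), xval (k+1) (by omega)]
          have g : (runOps (2 :: a :: b :: M ++ [d, c])).getD k false = false := by
            rw [gfull]
            rw [if_neg (show ¬ k < 2 from by omega), if_pos (show k < 2 + a from by omega)]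
          rw [g, if_neg (show ¬(false = true) from by simp),
              if_pos (show k < a+2 from by omega),
              if_pos (show k-1 < a+2 from by omega), Bool.true_or]
        · by_cases hkb : k = a+2
          · subst hkb
            simp only [if_neg hk0, if_neg (show ¬(a+2:ℕ) = N-1 from by omega)]
            rw [xval (a+2) (by omega), xval (a+2-1) (by omega), xval (a+2+1) (by omega)]
            have g : (runOps (2 :: a :: b :: M ++ [d, c])).getD (a+2) false = true := by
              rw [gfull]
              rw [if_neg (show ¬(a+2) < 2 from by omega),
                  if_neg (show ¬(a+2) < 2 + a from by omega),
                  if_pos (show (a+2) < 2 + a + b from by omega)]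
            rw [g, if_pos rfl,
                if_neg (show ¬(a+2) < a+2 from by omega),
                if_pos (show (a+2) < a+b+M.sum+d+2 from by omega),
                if_pos (show (a+2-1:ℕ) < a+2 from by omega),
                if_neg (show ¬(a+2+1) < a+2 from by omega),
                if_pos (show (a+2+1) < a+b+M.sum+d+2 from by omega), Bool.true_and]
            have W0 := W 0 (by omega)
            rw [if_pos rfl] at W0
            rw [show (a+2-(a+2) : ℕ) = 0 from by omega,
                show (a+2+1-(a+2) : ℕ) = 1 from by omega, W0]
          · by_cases hkN : k = N-1
            · subst hkN
              simp only [if_neg (show ¬(N-1:ℕ) = 0 from by omega), if_pos rfl, if_true]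
              rw [xval (N-1) (by omega), xval (N-1-1) (by omega), xval 0 (by omega)]
              have g : (runOps (2 :: a :: b :: M ++ [d, c])).getD (N-1) false = false := by
                rw [gfull]
                rw [if_neg (show ¬(N-1) < 2 from by omega),
                    if_neg (show ¬(N-1) < 2 + a from by omega),
                    if_neg (show ¬(N-1) < 2 + a + b from by omega),
                    if_neg (show ¬(N-1) < 2 + a + b + M.sum from by omega),
                    if_neg (show ¬(N-1) < 2 + a + b + M.sum + d from by omega)]
              rw [g, if_neg (show ¬(false = true) from by simp),
                  if_neg (show ¬(N-1) < a+2 from by omega),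
                  if_neg (show ¬(N-1) < a+b+M.sum+d+2 from by omega),
                  if_pos (show (0:ℕ) < a+2 from by omega), Bool.or_true]
            · by_cases hkc : a+b+M.sum+d+2 ≤ k
              · simp only [if_neg hk0, if_neg hkN]
                rw [xval k hk, xval (k-1) (by omega), xval (k+1) (by omega)]
                have g : (runOps (2 :: a :: b :: M ++ [d, c])).getD k false = false := by
                  rw [gfull]
                  rw [if_neg (show ¬ k < 2 from by omega),
                      if_neg (show ¬ k < 2 + a from by omega),
                      if_neg (show ¬ k < 2 + a + b from by omega),
                      if_neg (show ¬ k < 2 + a + b + M.sum from by omega),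
                      if_neg (show ¬ k < 2 + a + b + M.sum + d from by omega)]
                rw [g, if_neg (show ¬(false = true) from by simp),
                    if_neg (show ¬ k < a+2 from by omega),
                    if_neg (show ¬ k < a+b+M.sum+d+2 from by omega),
                    if_neg (show ¬ k+1 < a+2 from by omega),
                    if_neg (show ¬ k+1 < a+b+M.sum+d+2 from by omega), Bool.or_true]
              · by_cases hkd : k = a+b+M.sum+d+1
                · subst hkd
                  simp only [if_neg hk0, if_neg hkN]
                  rw [xval (a+b+M.sum+d+1) (by omega), xval (a+b+M.sum+d+1-1) (by omega),
                      xval (a+b+M.sum+d+1+1) (by omega)]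
                  have g : (runOps (2 :: a :: b :: M ++ [d, c])).getD (a+b+M.sum+d+1) false = true := by
                    rw [gfull]
                    rw [if_neg (show ¬(a+b+M.sum+d+1) < 2 from by omega),
                        if_neg (show ¬(a+b+M.sum+d+1) < 2 + a from by omega),
                        if_neg (show ¬(a+b+M.sum+d+1) < 2 + a + b from by omega),
                        if_neg (show ¬(a+b+M.sum+d+1) < 2 + a + b + M.sum from by omega),
                        if_pos (show (a+b+M.sum+d+1) < 2 + a + b + M.sum + d from by omega)]
                  rw [g, if_pos rfl,
                      if_neg (show ¬(a+b+M.sum+d+1) < a+2 from by omega),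
                      if_pos (show (a+b+M.sum+d+1) < a+b+M.sum+d+2 from by omega),
                      if_neg (show ¬(a+b+M.sum+d+1-1) < a+2 from by omega),
                      if_pos (show (a+b+M.sum+d+1-1) < a+b+M.sum+d+2 from by omega),
                      if_neg (show ¬(a+b+M.sum+d+1+1) < a+2 from by omega),
                      if_neg (show ¬(a+b+M.sum+d+1+1) < a+b+M.sum+d+2 from by omega), Bool.and_true]
                  have WL := W ((runOps ((b-1) :: M ++ [d-1])).length + 1) (by omega)
                  rw [if_neg (show ¬((runOps ((b-1) :: M ++ [d-1])).length + 1 = 0) from by omega),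
                      if_pos rfl] at WL
                  rw [show (a+b+M.sum+d+1-(a+2) : ℕ) = (runOps ((b-1) :: M ++ [d-1])).length + 1 from by omega,
                      show (a+b+M.sum+d+1-1-(a+2) : ℕ) = (runOps ((b-1) :: M ++ [d-1])).length from by omega,
                      WL]
                · -- interior : a+3 ≤ k ≤ a+b+M.sum+d
                  simp only [if_neg hk0, if_neg hkN]
                  have g := grel2 k (by omega) (by omega)
                  rw [xval k hk, xval (k-1) (by omega), xval (k+1) (by omega)]
                  rw [g,
                      if_neg (show ¬ k < a+2 from by omega),
                      if_pos (show k < a+b+M.sum+d+2 from by omega),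
                      if_neg (show ¬ k-1 < a+2 from by omega),
                      if_pos (show k-1 < a+b+M.sum+d+2 from by omega),
                      if_neg (show ¬ k+1 < a+2 from by omega),
                      if_pos (show k+1 < a+b+M.sum+d+2 from by omega)]
                  have Wk := W (k-(a+2)) (by omega)
                  rw [if_neg (show ¬(k-(a+2) = 0) from by omega),
                      if_neg (show ¬(k-(a+2) = (runOps ((b-1) :: M ++ [d-1])).length + 1) from by omega)] at Wk
                  rw [show (k-(a+2)-1 : ℕ) = k-1-(a+2) from by omega,
                      show (k-(a+2)+1 : ℕ) = k+1-(a+2) from by omega] at Wk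
                  rw [show (k-(a+3) : ℕ) = k-1-(a+2) from by omega] at g ⊢
                  exact Wk
  -- the two equivalences
  have eA : {z : {x : ZMod N → Bool // cycleMap (cOps (2 :: a :: b :: M ++ [d, c])) x = x} //
        z.1 0 = false}
      ≃ {y : Fin ((runOps ((a-1) :: b :: M ++ [d, c-1])).length + 2) → Bool //
          chainMap (runOps ((a-1) :: b :: M ++ [d, c-1])) y = y} := by
    refine
      { toFun := fun z => ⟨fun j => !z.1.1 ((j.val + 2 : ℕ) : ZMod N), mkChain1 z.1.1 z.1.2 z.2⟩
        invFun := fun w => ⟨⟨fun i => if i.val < 2 then false else !(aoExt w.1 (i.val - 2)),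
          mkCycle1 w.1 w.2⟩, ?_⟩
        left_inv := ?_
        right_inv := ?_ }
    · show (if (0 : ZMod N).val < 2 then false else _) = false
      rw [ZMod.val_zero, if_pos (by omega)]
    · intro z
      apply Subtype.ext
      apply Subtype.ext
      funext i
      show (if i.val < 2 then false
          else !(aoExt (fun j : Fin ((runOps ((a-1) :: b :: M ++ [d, c-1])).length + 2) =>
            !z.1.1 ((j.val + 2:ℕ):ZMod N)) (i.val - 2))) = z.1.1 i
      by_cases h : i.val < 2
      · rw [if_pos h]
        by_cases h0 : i.val = 0
        · have hi : i = 0 := by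
            rw [← ao_cast_val i, h0, Nat.cast_zero]
          rw [hi]; exact z.2.symm
        · have h1 : i.val = 1 := by omega
          have hi : i = ((1:ℕ) : ZMod N) := by rw [← ao_cast_val i, h1]
          rw [hi]; exact (x1false z.1.1 z.1.2 z.2).symm
      · rw [if_neg h]
        have hlt : i.val - 2 < (runOps ((a-1) :: b :: M ++ [d, c-1])).length + 2 := by
          have := ZMod.val_lt i; omega
        simp only [aoExt]
        rw [dif_pos hlt, Bool.not_not, show (i.val - 2 + 2 : ℕ) = i.val from by omega,
            ao_cast_val i]
    · intro w
      apply Subtype.ext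
      funext j
      show (!(if (((j.val + 2 : ℕ) : ZMod N)).val < 2 then false
          else !(aoExt w.1 ((((j.val + 2:ℕ):ZMod N)).val - 2)))) = w.1 j
      have hv : (((j.val + 2:ℕ):ZMod N)).val = j.val + 2 :=
        ao_val_cast _ (by have := j.isLt; omega)
      rw [hv, if_neg (show ¬ j.val + 2 < 2 from by omega),
          show (j.val + 2 - 2 : ℕ) = j.val from by omega, Bool.not_not]
      simp only [aoExt]
      rw [dif_pos j.isLt]
  have eB : {z : {x : ZMod N → Bool // cycleMap (cOps (2 :: a :: b :: M ++ [d, c])) x = x} //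
        z.1 0 = true}
      ≃ {y : Fin ((runOps ((b-1) :: M ++ [d-1])).length + 2) → Bool //
          chainMap (runOps ((b-1) :: M ++ [d-1])) y = y} := by
    refine
      { toFun := fun z => ⟨fun j => z.1.1 ((j.val + (a+2) : ℕ) : ZMod N),
          mkChain2 z.1.1 z.1.2 z.2⟩
        invFun := fun w => ⟨⟨fun i => if i.val < a+2 then true
            else if i.val < a+b+M.sum+d+2 then aoExt w.1 (i.val - (a+2)) else true,
          mkCycle2 w.1 w.2⟩, ?_⟩
        left_inv := ?_
        right_inv := ?_ }
    · show (if (0 : ZMod N).val < a+2 then true else _) = true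
      rw [ZMod.val_zero, if_pos (by omega)]
    · intro z
      apply Subtype.ext
      apply Subtype.ext
      funext i
      obtain ⟨hx1, hxN1, hLf, hRf⟩ := bvals z.1.1 z.1.2 z.2
      show (if i.val < a+2 then true
          else if i.val < a+b+M.sum+d+2 then
            aoExt (fun j : Fin ((runOps ((b-1) :: M ++ [d-1])).length + 2) =>
              z.1.1 ((j.val + (a+2):ℕ):ZMod N)) (i.val - (a+2)) else true) = z.1.1 i
      by_cases h : i.val < a+2
      · rw [if_pos h]
        by_cases h0 : i.val = 0
        · have hi : i = 0 := by rw [← ao_cast_val i, h0, Nat.cast_zero]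
          rw [hi]; exact z.2.symm
        · by_cases h1 : i.val = 1
          · have hi : i = ((1:ℕ):ZMod N) := by rw [← ao_cast_val i, h1]
            rw [hi]; exact hx1.symm
          · rw [← ao_cast_val i]
            exact (hLf i.val (by omega) (by omega)).symm
      · rw [if_neg h]
        by_cases h2 : i.val < a+b+M.sum+d+2
        · rw [if_pos h2]
          simp only [aoExt]
          rw [dif_pos (show i.val - (a+2) < (runOps ((b-1) :: M ++ [d-1])).length + 2 from
                by omega),
              show (i.val - (a+2) + (a+2) : ℕ) = i.val from by omega, ao_cast_val i]
        · rw [if_neg h2]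
          have hiv := ZMod.val_lt i
          have hval := hRf (N-1-i.val) (by omega)
          rw [show (N-1-(N-1-i.val) : ℕ) = i.val from by omega, ao_cast_val i] at hval
          exact hval.symm
    · intro w
      apply Subtype.ext
      funext j
      show (if (((j.val + (a+2) : ℕ):ZMod N)).val < a+2 then true
          else if (((j.val + (a+2):ℕ):ZMod N)).val < a+b+M.sum+d+2 then
            aoExt w.1 ((((j.val + (a+2):ℕ):ZMod N)).val - (a+2)) else true) = w.1 j
      have hv : (((j.val + (a+2):ℕ):ZMod N)).val = j.val + (a+2) :=
        ao_val_cast _ (by have := j.isLt; omega)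
      rw [hv, if_neg (show ¬ j.val + (a+2) < a+2 from by omega),
          if_pos (show j.val + (a+2) < a+b+M.sum+d+2 from by have := j.isLt; omega),
          show (j.val + (a+2) - (a+2) : ℕ) = j.val from by omega]
      simp only [aoExt]
      rw [dif_pos j.isLt]
  -- assemble
  have eS := (Equiv.sumCompl
    (fun z : {x : ZMod N → Bool // cycleMap (cOps (2 :: a :: b :: M ++ [d, c])) x = x} =>
      z.1 0 = true)).symm
  have eF : {z : {x : ZMod N → Bool // cycleMap (cOps (2 :: a :: b :: M ++ [d, c])) x = x} //
        ¬ z.1 0 = true}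
      ≃ {z : {x : ZMod N → Bool // cycleMap (cOps (2 :: a :: b :: M ++ [d, c])) x = x} //
        z.1 0 = false} :=
    Equiv.subtypeEquivRight (fun z => by simp [Bool.not_eq_true])
  rw [Nat.card_congr (eS.trans (Equiv.sumCongr eB (eF.trans eA))), Nat.card_sum, Nat.add_comm]
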